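/- arXiv:2403.15714 — 2 statements merged into one kernel-verified Lean document; each statement's English description precedes it below -/
import Mathlib

section
/- With the elastic moment tensors m^{ij}_{kl} and the quantities 𝔼^{(1,i)}, 𝔼^{(2,i)} defined as in the context, it holds that m^{22}_{12} = m^{22}_{21} = (μ/(2(κ−1)))·Im 𝔼^{(1,1)} + (μ/2)·Im 𝔼^{(1,2)}. -/
open MeasureTheory Complex

lemma mul_int_aux (σ : Measure ℂ) (K : Set ℂ) (hK : IsCompact K) (hσK : σ Kᶜ = 0)
    (φ : ℂ → ℂ) (hφ : Integrable φ σ) :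
    Integrable (fun z => z * φ z) σ ∧ Integrable (fun z => (starRingEnd ℂ) z * φ z) σ := by
  have hmem : ∀ᵐ z ∂σ, z ∈ K := by
    rw [ae_iff]
    exact hσK
  obtain ⟨C, hC⟩ := hK.isBounded.exists_norm_le
  constructor
  · refine (hφ.norm.const_mul C).mono' (aestronglyMeasurable_id.mul hφ.1) ?_
    filter_upwards [hmem] with z hz
    rw [norm_mul]
    exact mul_le_mul_of_nonneg_right (hC z hz) (norm_nonneg _)
  · refine (hφ.norm.const_mul C).mono'
      (Complex.continuous_conj.aestronglyMeasurable.mul hφ.1) ?_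
    filter_upwards [hmem] with z hz
    rw [norm_mul, RCLike.norm_conj]
    exact mul_le_mul_of_nonneg_right (hC z hz) (norm_nonneg _)

/-- Elastic moment tensor identity from Theorem 3.2 of the paper (complex formulation). -/
theorem stmt_12 (σ : Measure ℂ) [IsFiniteMeasure σ]
    (K : Set ℂ) (hK : IsCompact K) (hσK : σ Kᶜ = 0)
    (μ κ : ℝ) (hμ : 0 < μ) (hκ : 1 < κ)
    (φ₁ φ₂ φ₃ : ℂ → ℂ)
    (hφ₁ : Integrable φ₁ σ) (hφ₂ : Integrable φ₂ σ) (hφ₃ : Integrable φ₃ σ)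
    (hmean₁ : ∫ z, φ₁ z ∂σ = 0) (hmean₂ : ∫ z, φ₂ z ∂σ = 0) (hmean₃ : ∫ z, φ₃ z ∂σ = 0)
    (hrot₁ : (∫ z, (starRingEnd ℂ) z * φ₁ z ∂σ).im = 0)
    (hrot₂ : (∫ z, (starRingEnd ℂ) z * φ₂ z ∂σ).im = 0)
    (hrot₃ : (∫ z, (starRingEnd ℂ) z * φ₃ z ∂σ).im = 0)
    (g11 g22 g12 g21 : ℂ → ℂ)
    (hg11 : ∀ z, g11 z = ((μ / (κ - 1) : ℝ) : ℂ) * φ₁ z - (μ : ℂ) * φ₂ z)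
    (hg22 : ∀ z, g22 z = ((μ / (κ - 1) : ℝ) : ℂ) * φ₁ z + (μ : ℂ) * φ₂ z)
    (hg12 : ∀ z, g12 z = (μ : ℂ) * φ₃ z)
    (hg21 : ∀ z, g21 z = (μ : ℂ) * φ₃ z)
    (w11 w12 w21 w22 : ℂ → ℂ)
    (hw11 : ∀ z, w11 z = (z.re : ℂ))
    (hw12 : ∀ z, w12 z = Complex.I * (z.re : ℂ))
    (hw21 : ∀ z, w21 z = (z.im : ℂ))
    (hw22 : ∀ z, w22 z = Complex.I * (z.im : ℂ))
    (E11 E12 E13 E21 E22 E23 : ℂ)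
    (hE11 : E11 = ∫ z, z * φ₁ z ∂σ) (hE12 : E12 = ∫ z, z * φ₂ z ∂σ)
    (hE13 : E13 = ∫ z, z * φ₃ z ∂σ)
    (hE21 : E21 = ∫ z, z * (starRingEnd ℂ) (φ₁ z) ∂σ)
    (hE22 : E22 = ∫ z, z * (starRingEnd ℂ) (φ₂ z) ∂σ)
    (hE23 : E23 = ∫ z, z * (starRingEnd ℂ) (φ₃ z) ∂σ)
    (m2212 : ℝ) (hm2212 : m2212 = (∫ z, (starRingEnd ℂ) (w12 z) * g22 z ∂σ).re)
    (m2221 : ℝ) (hm2221 : m2221 = (∫ z, (starRingEnd ℂ) (w21 z) * g22 z ∂σ).re)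
    :
    m2212 = m2221 ∧ m2221 = μ / (2 * (κ - 1)) * E11.im + μ / 2 * E12.im := by
  obtain ⟨h1z, h1c⟩ := mul_int_aux σ K hK hσK φ₁ hφ₁
  obtain ⟨h2z, h2c⟩ := mul_int_aux σ K hK hσK φ₂ hφ₂
  set a : ℝ := μ / (κ - 1) with ha
  set X1 : ℂ := ∫ z, z * φ₁ z ∂σ with hX1
  set X2 : ℂ := ∫ z, z * φ₂ z ∂σ with hX2
  set Y1 : ℂ := ∫ z, (starRingEnd ℂ) z * φ₁ z ∂σ with hY1
  set Y2 : ℂ := ∫ z, (starRingEnd ℂ) z * φ₂ z ∂σ with hY2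
  -- integrability of z * g22 and conj z * g22
  have hgz : Integrable (fun z => z * g22 z) σ := by
    refine ((h1z.const_mul ((a : ℂ))).add (h2z.const_mul ((μ : ℂ)))).congr
      (Filter.Eventually.of_forall fun z => ?_)
    simp only [Pi.add_apply]; rw [hg22]; ring
  have hgc : Integrable (fun z => (starRingEnd ℂ) z * g22 z) σ := by
    refine ((h1c.const_mul ((a : ℂ))).add (h2c.const_mul ((μ : ℂ)))).congr
      (Filter.Eventually.of_forall fun z => ?_)
    simp only [Pi.add_apply]; rw [hg22]; ring
  have hA : ∫ z, z * g22 z ∂σ = (a : ℂ) * X1 + (μ : ℂ) * X2 := by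
    rw [hX1, hX2, ← integral_const_mul, ← integral_const_mul,
      ← integral_add (h1z.const_mul _) (h2z.const_mul _)]
    congr 1; funext z; rw [hg22]; ring
  have hB : ∫ z, (starRingEnd ℂ) z * g22 z ∂σ = (a : ℂ) * Y1 + (μ : ℂ) * Y2 := by
    rw [hY1, hY2, ← integral_const_mul, ← integral_const_mul,
      ← integral_add (h1c.const_mul _) (h2c.const_mul _)]
    congr 1; funext z; rw [hg22]; ring
  have hI12 : ∫ z, (starRingEnd ℂ) (w12 z) * g22 z ∂σ
      = (-Complex.I / 2) * ((a : ℂ) * X1 + (μ : ℂ) * X2 + ((a : ℂ) * Y1 + (μ : ℂ) * Y2)) := by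
    rw [← hA, ← hB, ← integral_add hgz hgc, ← integral_const_mul]
    congr 1; funext z
    rw [hw12, map_mul, Complex.conj_I, Complex.conj_ofReal,
      show z * g22 z + (starRingEnd ℂ) z * g22 z = (z + (starRingEnd ℂ) z) * g22 z from by ring,
      Complex.add_conj]
    push_cast
    ring
  have hI21 : ∫ z, (starRingEnd ℂ) (w21 z) * g22 z ∂σ
      = (-Complex.I / 2) * ((a : ℂ) * X1 + (μ : ℂ) * X2 - ((a : ℂ) * Y1 + (μ : ℂ) * Y2)) := by
    rw [← hA, ← hB, ← integral_sub hgz hgc, ← integral_const_mul]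
    congr 1; funext z
    rw [hw21, Complex.conj_ofReal,
      show z * g22 z - (starRingEnd ℂ) z * g22 z = (z - (starRingEnd ℂ) z) * g22 z from by ring,
      Complex.sub_conj]
    push_cast
    linear_combination (↑z.im * g22 z) * Complex.I_sq
  have hY1im : Y1.im = 0 := hrot₁
  have hY2im : Y2.im = 0 := hrot₂
  rw [hm2212, hm2221, hE11, hE12, hI12, hI21]
  constructor
  · simp [Complex.div_re, Complex.div_im, Complex.mul_re, Complex.mul_im, hY1im, hY2im,
      Complex.normSq]
  · simp [Complex.div_re, Complex.div_im, Complex.mul_re, Complex.mul_im, hY1im, hY2im,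
      Complex.normSq]
    have hk : κ - 1 ≠ 0 := by linarith
    rw [ha]
    field_simp
end

section
/- Suppose, in addition to the setting of the context, that the elastic moment tensors satisfy the symmetry relations m^{ij}_{kl} = m^{ji}_{kl} = m^{ij}_{lk} = m^{kl}_{ij} for all i,j,k,l ∈ {1,2}. Then the following three identities hold: Re 𝔼^{(1,1)} = −(κ−1)·Re 𝔼^{(2,2)}, Re 𝔼^{(1,3)} = −Im 𝔼^{(1,2)}, and Im 𝔼^{(1,1)} = (κ−1)·Re 𝔼^{(2,3)}. -/
open MeasureTheory Complex

/-- Splitting an integral of a 4-term linear combination. -/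
lemma split4_aux {σ : Measure ℂ} (f₁ f₂ f₃ f₄ : ℂ → ℂ)
    (h₁ : Integrable f₁ σ) (h₂ : Integrable f₂ σ) (h₃ : Integrable f₃ σ)
    (h₄ : Integrable f₄ σ) (c₁ c₂ c₃ c₄ : ℂ) (g : ℂ → ℂ)
    (hg : ∀ z, g z = c₁ * f₁ z + c₂ * f₂ z + c₃ * f₃ z + c₄ * f₄ z) :
    ∫ z, g z ∂σ = c₁ * ∫ z, f₁ z ∂σ + c₂ * ∫ z, f₂ z ∂σ + c₃ * ∫ z, f₃ z ∂σ
      + c₄ * ∫ z, f₄ z ∂σ := by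
  have H1 : Integrable (fun z => c₁ * f₁ z) σ := h₁.const_mul c₁
  have H2 : Integrable (fun z => c₂ * f₂ z) σ := h₂.const_mul c₂
  have H3 : Integrable (fun z => c₃ * f₃ z) σ := h₃.const_mul c₃
  have H4 : Integrable (fun z => c₄ * f₄ z) σ := h₄.const_mul c₄
  have H12 : Integrable (fun z => c₁ * f₁ z + c₂ * f₂ z) σ := H1.add H2
  have H123 : Integrable (fun z => c₁ * f₁ z + c₂ * f₂ z + c₃ * f₃ z) σ := H12.add H3
  calc ∫ z, g z ∂σ
      = ∫ z, (c₁ * f₁ z + c₂ * f₂ z + c₃ * f₃ z + c₄ * f₄ z) ∂σ := by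
        simp only [hg]
    _ = _ := by
        rw [integral_add H123 H4, integral_add H12 H3, integral_add H1 H2,
          integral_const_mul, integral_const_mul, integral_const_mul, integral_const_mul]

/-- If the first-order elastic moment tensors satisfy the symmetries
`m^{ij}_{kl} = m^{ji}_{kl} = m^{ij}_{lk} = m^{kl}_{ij}`, then
`Re 𝔼^{(1,1)} = -(κ-1) Re 𝔼^{(2,2)}`, `Re 𝔼^{(1,3)} = -Im 𝔼^{(1,2)}`
and `Im 𝔼^{(1,1)} = (κ-1) Re 𝔼^{(2,3)}`. -/
theorem stmt_13 (σ : Measure ℂ) [IsFiniteMeasure σ]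
    (K : Set ℂ) (hK : IsCompact K) (hσK : σ Kᶜ = 0)
    (μ κ : ℝ) (hμ : 0 < μ) (hκ : 1 < κ)
    (φ₁ φ₂ φ₃ : ℂ → ℂ)
    (hφ₁ : Integrable φ₁ σ) (hφ₂ : Integrable φ₂ σ) (hφ₃ : Integrable φ₃ σ)
    (hmean₁ : ∫ z, φ₁ z ∂σ = 0) (hmean₂ : ∫ z, φ₂ z ∂σ = 0) (hmean₃ : ∫ z, φ₃ z ∂σ = 0)
    (hrot₁ : (∫ z, (starRingEnd ℂ) z * φ₁ z ∂σ).im = 0)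
    (hrot₂ : (∫ z, (starRingEnd ℂ) z * φ₂ z ∂σ).im = 0)
    (hrot₃ : (∫ z, (starRingEnd ℂ) z * φ₃ z ∂σ).im = 0)
    (G : Fin 2 → Fin 2 → ℂ → ℂ)
    (hG11 : ∀ z, G 0 0 z = ((μ / (κ - 1) : ℝ) : ℂ) * φ₁ z - (μ : ℂ) * φ₂ z)
    (hG22 : ∀ z, G 1 1 z = ((μ / (κ - 1) : ℝ) : ℂ) * φ₁ z + (μ : ℂ) * φ₂ z)
    (hG12 : ∀ z, G 0 1 z = (μ : ℂ) * φ₃ z)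
    (hG21 : ∀ z, G 1 0 z = (μ : ℂ) * φ₃ z)
    (W : Fin 2 → Fin 2 → ℂ → ℂ)
    (hW11 : ∀ z, W 0 0 z = (z.re : ℂ))
    (hW12 : ∀ z, W 0 1 z = Complex.I * (z.re : ℂ))
    (hW21 : ∀ z, W 1 0 z = (z.im : ℂ))
    (hW22 : ∀ z, W 1 1 z = Complex.I * (z.im : ℂ))
    (m : Fin 2 → Fin 2 → Fin 2 → Fin 2 → ℝ)
    (hm : ∀ i j k l, m i j k l = (∫ z, (starRingEnd ℂ) (W k l z) * G j i z ∂σ).re)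
    (hsym : ∀ i j k l, m i j k l = m j i k l ∧ m i j k l = m i j l k ∧ m i j k l = m k l i j)
    (E11 E12 E13 E22 E23 : ℂ)
    (hE11 : E11 = ∫ z, z * φ₁ z ∂σ) (hE12 : E12 = ∫ z, z * φ₂ z ∂σ)
    (hE13 : E13 = ∫ z, z * φ₃ z ∂σ)
    (hE22 : E22 = ∫ z, z * (starRingEnd ℂ) (φ₂ z) ∂σ)
    (hE23 : E23 = ∫ z, z * (starRingEnd ℂ) (φ₃ z) ∂σ) :
    E11.re = -(κ - 1) * E22.re ∧ E13.re = -E12.im ∧ E11.im = (κ - 1) * E23.re := by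
  have hκ1 : (0:ℝ) < κ - 1 := by linarith
  have hκ1' : (κ - 1 : ℝ) ≠ 0 := ne_of_gt hκ1
  have hμ' : (μ : ℝ) ≠ 0 := ne_of_gt hμ
  -- a.e. boundedness
  have haeK : ∀ᵐ z ∂σ, z ∈ K := by
    rw [MeasureTheory.ae_iff]
    exact hσK
  obtain ⟨C, hC⟩ := hK.isBounded.exists_norm_le
  have hbd : ∀ᵐ z ∂σ, ‖z‖ ≤ C := haeK.mono fun z hz => hC z hz
  have hbdc : ∀ᵐ z ∂σ, ‖(starRingEnd ℂ) z‖ ≤ C := hbd.mono fun z hz => by simpa using hz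
  have hmz : AEStronglyMeasurable (fun z : ℂ => z) σ :=
    aestronglyMeasurable_id
  have hmcz : AEStronglyMeasurable (fun z : ℂ => (starRingEnd ℂ) z) σ :=
    Complex.continuous_conj.aestronglyMeasurable
  have hintz : ∀ (φ : ℂ → ℂ), Integrable φ σ → Integrable (fun z => z * φ z) σ :=
    fun φ hφ => hφ.bdd_mul hmz hbd
  have hintcz : ∀ (φ : ℂ → ℂ), Integrable φ σ →
      Integrable (fun z => (starRingEnd ℂ) z * φ z) σ :=
    fun φ hφ => hφ.bdd_mul hmcz hbdc
  -- abbreviations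
  set P1 := ∫ z, z * φ₁ z ∂σ with hP1
  set P2 := ∫ z, z * φ₂ z ∂σ with hP2
  set P3 := ∫ z, z * φ₃ z ∂σ with hP3
  set Q1 := ∫ z, (starRingEnd ℂ) z * φ₁ z ∂σ with hQ1
  set Q2 := ∫ z, (starRingEnd ℂ) z * φ₂ z ∂σ with hQ2
  set Q3 := ∫ z, (starRingEnd ℂ) z * φ₃ z ∂σ with hQ3
  -- the six moment values
  have e1 : m 0 0 1 1 = -(μ / (κ - 1)) / 2 * P1.re + μ / (κ - 1) / 2 * Q1.re
      + μ / 2 * P2.re + -(μ / 2) * Q2.re := by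
    rw [hm, split4_aux _ _ _ _ (hintz φ₁ hφ₁) (hintcz φ₁ hφ₁) (hintz φ₂ hφ₂) (hintcz φ₂ hφ₂)
      ((-(μ / (κ - 1)) / 2 : ℝ) : ℂ) ((μ / (κ - 1) / 2 : ℝ) : ℂ) ((μ / 2 : ℝ) : ℂ)
      ((-(μ / 2) : ℝ) : ℂ) _ (fun z => by
        rw [hW22, hG11]
        apply Complex.ext <;>
          simp [Complex.mul_re, Complex.mul_im] <;> ring)]
    simp only [Complex.add_re, Complex.mul_re, Complex.mul_im, Complex.ofReal_re,
      Complex.ofReal_im, Complex.I_re, Complex.I_im, Complex.neg_re, Complex.neg_im]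
    ring
  have e2 : m 1 1 0 0 = μ / (κ - 1) / 2 * P1.re + μ / (κ - 1) / 2 * Q1.re
      + μ / 2 * P2.re + μ / 2 * Q2.re := by
    rw [hm, split4_aux _ _ _ _ (hintz φ₁ hφ₁) (hintcz φ₁ hφ₁) (hintz φ₂ hφ₂) (hintcz φ₂ hφ₂)
      ((μ / (κ - 1) / 2 : ℝ) : ℂ) ((μ / (κ - 1) / 2 : ℝ) : ℂ) ((μ / 2 : ℝ) : ℂ)
      ((μ / 2 : ℝ) : ℂ) _ (fun z => by
        rw [hW11, hG22]
        apply Complex.ext <;>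
          simp [Complex.mul_re, Complex.mul_im] <;> ring)]
    simp only [Complex.add_re, Complex.mul_re, Complex.mul_im, Complex.ofReal_re,
      Complex.ofReal_im, Complex.I_re, Complex.I_im, Complex.neg_re, Complex.neg_im]
    ring
  have e3 : m 0 1 0 0 = μ / 2 * P3.re + μ / 2 * Q3.re := by
    rw [hm, split4_aux _ _ _ _ (hintz φ₃ hφ₃) (hintcz φ₃ hφ₃) (hintz φ₃ hφ₃) (hintcz φ₃ hφ₃)
      ((μ / 2 : ℝ) : ℂ) ((μ / 2 : ℝ) : ℂ) (0 : ℂ) (0 : ℂ) _ (fun z => by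
        rw [hW11, hG21]
        apply Complex.ext <;>
          simp [Complex.mul_re, Complex.mul_im] <;> ring)]
    simp only [Complex.add_re, Complex.mul_re, Complex.mul_im, Complex.ofReal_re,
      Complex.ofReal_im, Complex.zero_re, Complex.zero_im]
    ring
  have e4 : m 0 0 0 1 = μ / (κ - 1) / 2 * P1.im + μ / (κ - 1) / 2 * Q1.im
      - μ / 2 * P2.im - μ / 2 * Q2.im := by
    rw [hm, split4_aux _ _ _ _ (hintz φ₁ hφ₁) (hintcz φ₁ hφ₁) (hintz φ₂ hφ₂) (hintcz φ₂ hφ₂)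
      (((μ / (κ - 1) / 2 : ℝ) : ℂ) * (-Complex.I)) (((μ / (κ - 1) / 2 : ℝ) : ℂ) * (-Complex.I))
      (((μ / 2 : ℝ) : ℂ) * Complex.I) (((μ / 2 : ℝ) : ℂ) * Complex.I) _ (fun z => by
        rw [hW12, hG11]
        apply Complex.ext <;>
          simp [Complex.mul_re, Complex.mul_im] <;> ring)]
    simp only [Complex.add_re, Complex.mul_re, Complex.mul_im, Complex.ofReal_re,
      Complex.ofReal_im, Complex.I_re, Complex.I_im, Complex.neg_re, Complex.neg_im]
    ring
  have e5 : m 0 1 1 1 = -(μ / 2) * P3.re + μ / 2 * Q3.re := by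
    rw [hm, split4_aux _ _ _ _ (hintz φ₃ hφ₃) (hintcz φ₃ hφ₃) (hintz φ₃ hφ₃) (hintcz φ₃ hφ₃)
      ((-(μ / 2) : ℝ) : ℂ) ((μ / 2 : ℝ) : ℂ) (0 : ℂ) (0 : ℂ) _ (fun z => by
        rw [hW22, hG21]
        apply Complex.ext <;>
          simp [Complex.mul_re, Complex.mul_im] <;> ring)]
    simp only [Complex.add_re, Complex.mul_re, Complex.mul_im, Complex.ofReal_re,
      Complex.ofReal_im, Complex.zero_re, Complex.zero_im, Complex.neg_re, Complex.neg_im]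
    ring
  have e6 : m 1 1 0 1 = μ / (κ - 1) / 2 * P1.im + μ / (κ - 1) / 2 * Q1.im
      + μ / 2 * P2.im + μ / 2 * Q2.im := by
    rw [hm, split4_aux _ _ _ _ (hintz φ₁ hφ₁) (hintcz φ₁ hφ₁) (hintz φ₂ hφ₂) (hintcz φ₂ hφ₂)
      (((μ / (κ - 1) / 2 : ℝ) : ℂ) * (-Complex.I)) (((μ / (κ - 1) / 2 : ℝ) : ℂ) * (-Complex.I))
      (((μ / 2 : ℝ) : ℂ) * (-Complex.I)) (((μ / 2 : ℝ) : ℂ) * (-Complex.I)) _ (fun z => by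
        rw [hW12, hG22]
        apply Complex.ext <;>
          simp [Complex.mul_re, Complex.mul_im] <;> ring)]
    simp only [Complex.add_re, Complex.mul_re, Complex.mul_im, Complex.ofReal_re,
      Complex.ofReal_im, Complex.I_re, Complex.I_im, Complex.neg_re, Complex.neg_im]
    ring
  set a := μ / (κ - 1) with hadef
  have hμeq : μ = a * (κ - 1) := by rw [hadef]; field_simp
  have ha0 : a ≠ 0 := by
    rw [hadef]
    positivity
  -- express E22, E23 through Q2, Q3
  have hconj2 : E22 = (starRingEnd ℂ) Q2 := by
    rw [hE22, hQ2, ← integral_conj]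
    congr 1
    funext z
    simp [mul_comm]
  have hconj3 : E23 = (starRingEnd ℂ) Q3 := by
    rw [hE23, hQ3, ← integral_conj]
    congr 1
    funext z
    simp [mul_comm]
  have hE22re : E22.re = Q2.re := by rw [hconj2]; simp
  have hE23re : E23.re = Q3.re := by rw [hconj3]; simp
  -- symmetry equations
  have s1 : m 0 0 1 1 = m 1 1 0 0 := (hsym 0 0 1 1).2.2
  have s2 : m 0 1 0 0 = m 0 0 0 1 := (hsym 0 1 0 0).2.2
  have s3 : m 0 1 1 1 = m 1 1 0 1 := (hsym 0 1 1 1).2.2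
  rw [e1, e2] at s1
  rw [e3, e4] at s2
  rw [e5, e6] at s3
  simp only [hrot₁, hrot₂, mul_zero, add_zero, sub_zero] at s2 s3
  rw [hE11, hE12, hE13, hE22re, hE23re]
  refine ⟨?_, ?_, ?_⟩
  · -- P1.re = -(κ-1) * Q2.re
    have k1 : a * P1.re = -(μ * Q2.re) := by linarith
    have h2 : a * P1.re = a * (-(κ - 1) * Q2.re) := by
      rw [k1, hμeq]; ring
    exact mul_left_cancel₀ ha0 h2
  · -- P3.re = -P2.im
    have k2 : μ * P3.re = μ * -P2.im := by linarith
    exact mul_left_cancel₀ hμ' k2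
  · -- P1.im = (κ-1) * Q3.re
    have k3 : a * P1.im = μ * Q3.re := by linarith
    have h2 : a * P1.im = a * ((κ - 1) * Q3.re) := by
      rw [k3, hμeq]; ring
    exact mul_left_cancel₀ ha0 h2
end
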